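/- arXiv:2404.14778 — 6 statements merged into one kernel-verified Lean document; each statement's English description precedes it below -/
import Mathlib

section
/- First-order spatial variation of the channel gain (Lemma 1, first order; Appendix A, Eq. (38)): if R ≠ L, R ≠ U, cosθ ≠ 0 and cosφ ≠ 0, then h is differentiable at R and its gradient at R equals h(R) • [ (m/(d1·cosθ)) • N1 + (1/(d2·cosφ)) • N2 − (m/d1 + 2/(d1+d2)) • L̂R − (1/d2 + 2/(d1+d2)) • ÛR ]. -/
open scoped RealInnerProductSpace

lemma hasFDerivAt_norm_sub {E : Type*} [NormedAddCommGroup E] [InnerProductSpace ℝ E]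
    (c p : E) (hp : p ≠ c) :
    HasFDerivAt (fun x => ‖x - c‖) (innerSL ℝ ((‖p - c‖)⁻¹ • (p - c))) p := by
  have hne : p - c ≠ 0 := sub_ne_zero.2 hp
  have hnorm : ‖p - c‖ ≠ 0 := norm_ne_zero_iff.2 hne
  have hsub : HasFDerivAt (fun x : E => x - c) (ContinuousLinearMap.id ℝ E) p := by
    simpa using (hasFDerivAt_id p).sub_const c
  have hsq : HasFDerivAt (fun x => ‖x - c‖ ^ 2)
      ((2 : ℕ) • (innerSL ℝ (p - c)).comp (ContinuousLinearMap.id ℝ E)) p := hsub.norm_sq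
  have hsqrtne : ‖p - c‖ ^ 2 ≠ 0 := pow_ne_zero _ hnorm
  have hsqrt := (Real.hasDerivAt_sqrt hsqrtne).comp_hasFDerivAt p hsq
  have heq : ((fun x => Real.sqrt x) ∘ fun x : E => ‖x - c‖ ^ 2) = fun x : E => ‖x - c‖ := by
    funext x; simp [Function.comp, Real.sqrt_sq (norm_nonneg _)]
  rw [heq] at hsqrt
  refine hsqrt.congr_fderiv ?_
  ext y
  simp only [ContinuousLinearMap.smul_apply, ContinuousLinearMap.coe_smul', Pi.smul_apply,
    ContinuousLinearMap.comp_apply, ContinuousLinearMap.id_apply, innerSL_apply_apply,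
    real_inner_smul_left, Real.sqrt_sq (norm_nonneg _), nsmul_eq_mul]
  field_simp
  ring
  rw [mul_right_comm, mul_inv_cancel₀ hnorm, one_mul]

set_option maxHeartbeats 1600000 in
/-- First-order spatial variation of the Lambertian channel gain (Lemma 1, first order):
the gradient of `h` at `R` equals `h R` times the stated combination of
`N1`, `N2`, `L̂R` and `ÛR`. -/
theorem lambertian_gain_gradient
    (L U N1 N2 : EuclideanSpace ℝ (Fin 3))
    (hN1 : ‖N1‖ = 1) (hN2 : ‖N2‖ = 1)
    (m : ℕ) (hm : 1 ≤ m)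
    (h : EuclideanSpace ℝ (Fin 3) → ℝ)
    (hdef : ∀ R, h R =
      (⟪N1, R - L⟫ / ‖R - L‖) ^ m * (⟪N2, R - U⟫ / ‖R - U‖) / (‖R - L‖ + ‖R - U‖) ^ 2)
    (R : EuclideanSpace ℝ (Fin 3)) (hRL : R ≠ L) (hRU : R ≠ U)
    (d1 d2 : ℝ) (hd1 : d1 = ‖R - L‖) (hd2 : d2 = ‖R - U‖)
    (LR UR : EuclideanSpace ℝ (Fin 3)) (hLR : LR = (1 / d1) • (R - L)) (hUR : UR = (1 / d2) • (R - U))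
    (cosθ cosφ : ℝ) (hcosθ : cosθ = ⟪N1, LR⟫) (hcosφ : cosφ = ⟪N2, UR⟫)
    (hθ : cosθ ≠ 0) (hφ : cosφ ≠ 0) :
    DifferentiableAt ℝ h R ∧
      gradient h R = h R •
        (((m : ℝ) / (d1 * cosθ)) • N1 + (1 / (d2 * cosφ)) • N2
          - ((m : ℝ) / d1 + 2 / (d1 + d2)) • LR
          - (1 / d2 + 2 / (d1 + d2)) • UR) := by
  have hd1pos : (0:ℝ) < d1 := by rw [hd1]; exact norm_pos_iff.2 (sub_ne_zero.2 hRL)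
  have hd2pos : (0:ℝ) < d2 := by rw [hd2]; exact norm_pos_iff.2 (sub_ne_zero.2 hRU)
  have hd1ne : d1 ≠ 0 := hd1pos.ne'
  have hd2ne : d2 ≠ 0 := hd2pos.ne'
  have hsne : d1 + d2 ≠ 0 := by positivity
  have hcosθ' : cosθ = ⟪N1, R - L⟫ / d1 := by
    rw [hcosθ, hLR, real_inner_smul_right]; ring
  have hcosφ' : cosφ = ⟪N2, R - U⟫ / d2 := by
    rw [hcosφ, hUR, real_inner_smul_right]; ring
  have hane : ⟪N1, R - L⟫ ≠ 0 := fun h0 => hθ (by rw [hcosθ', h0, zero_div])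
  have hbne : ⟪N2, R - U⟫ ≠ 0 := fun h0 => hφ (by rw [hcosφ', h0, zero_div])
  -- derivatives of the pieces
  have hu1 : HasFDerivAt (fun x : EuclideanSpace ℝ (Fin 3) => ⟪N1, x - L⟫) (innerSL ℝ N1) R := by
    have := ((innerSL ℝ N1).hasFDerivAt (x := R - L)).comp R
      (by simpa using (hasFDerivAt_id R).sub_const L :
        HasFDerivAt (fun x : EuclideanSpace ℝ (Fin 3) => x - L)
          (ContinuousLinearMap.id ℝ (EuclideanSpace ℝ (Fin 3))) R)
    exact this
  have hu2 : HasFDerivAt (fun x : EuclideanSpace ℝ (Fin 3) => ⟪N2, x - U⟫) (innerSL ℝ N2) R := by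
    have := ((innerSL ℝ N2).hasFDerivAt (x := R - U)).comp R
      (by simpa using (hasFDerivAt_id R).sub_const U :
        HasFDerivAt (fun x : EuclideanSpace ℝ (Fin 3) => x - U)
          (ContinuousLinearMap.id ℝ (EuclideanSpace ℝ (Fin 3))) R)
    exact this
  have hn1 := hasFDerivAt_norm_sub L R hRL
  have hn2 := hasFDerivAt_norm_sub U R hRU
  have hn1ne : ‖R - L‖ ≠ 0 := hd1 ▸ hd1ne
  have hn2ne : ‖R - U‖ ≠ 0 := hd2 ▸ hd2ne
  have hinv1 := (hasDerivAt_inv hn1ne).comp_hasFDerivAt R hn1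
  have hinv2 := (hasDerivAt_inv hn2ne).comp_hasFDerivAt R hn2
  have hq1 := hu1.mul hinv1
  have hq2 := hu2.mul hinv2
  have hp1 := (hasDerivAt_pow m _).comp_hasFDerivAt R hq1
  have hden0 := hn1.add hn2
  have hdenne : ‖R - L‖ + ‖R - U‖ ≠ 0 := by rw [← hd1, ← hd2]; exact hsne
  have hden := (hasDerivAt_pow 2 _).comp_hasFDerivAt R hden0
  have hdenne2 : (‖R - L‖ + ‖R - U‖) ^ 2 ≠ 0 := pow_ne_zero _ hdenne
  have hdinv := (hasDerivAt_inv hdenne2).comp_hasFDerivAt R hden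
  have htop := hp1.mul hq2
  have hh0 := htop.mul hdinv
  have hh : HasFDerivAt h _ R :=
    hh0.congr_of_eventuallyEq (Filter.Eventually.of_forall (fun x => by
      simp only [Function.comp_apply, hdef x, div_eq_mul_inv, Pi.mul_apply, Pi.add_apply]))
  refine ⟨hh.differentiableAt, ?_⟩
  set G : EuclideanSpace ℝ (Fin 3) := h R •
        (((m : ℝ) / (d1 * cosθ)) • N1 + (1 / (d2 * cosφ)) • N2
          - ((m : ℝ) / d1 + 2 / (d1 + d2)) • LR
          - (1 / d2 + 2 / (d1 + d2)) • UR) with hG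
  have hgrad : HasGradientAt h G R := by
    rw [hasGradientAt_iff_hasFDerivAt]
    refine hh.congr_fderiv ?_
    ext y
    obtain ⟨k, rfl⟩ : ∃ k, m = k + 1 := ⟨m - 1, (Nat.succ_pred_eq_of_pos hm).symm⟩
    have hhR : h R = (⟪N1, R - L⟫ / d1) ^ (k+1) * (⟪N2, R - U⟫ / d2) / (d1 + d2) ^ 2 := by
      rw [hdef R, ← hd1, ← hd2]
    set v1 : EuclideanSpace ℝ (Fin 3) := R - L with hv1
    set v2 : EuclideanSpace ℝ (Fin 3) := R - U with hv2
    simp only [InnerProductSpace.toDual_apply_apply, hG, hhR, hLR, hUR, hcosθ', hcosφ',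
      ← hv1, ← hv2, ← hd1, ← hd2,
      ContinuousLinearMap.smul_apply, ContinuousLinearMap.add_apply,
      ContinuousLinearMap.sub_apply, ContinuousLinearMap.coe_smul', Pi.smul_apply,
      innerSL_apply_apply, Function.comp_apply, smul_eq_mul,
      inner_add_left, inner_sub_left, inner_smul_left, real_inner_smul_left,
      RCLike.star_def, starRingEnd_apply, star_trivial, Pi.mul_apply, Pi.add_apply]
    push_cast
    set a : ℝ := ⟪N1, v1⟫ with ha
    set b : ℝ := ⟪N2, v2⟫ with hb
    set α : ℝ := ⟪N1, y⟫ with hα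
    set β : ℝ := ⟪N2, y⟫ with hβ
    set γ : ℝ := ⟪v1, y⟫ with hγ
    set δ : ℝ := ⟪v2, y⟫ with hδ
    simp only [div_pow, mul_pow, inv_pow]
    field_simp
    ring
  rw [hgrad.gradient]
end

section
/- Second-order spatial expansion of the relative channel-gain variation (Lemma 1): assume R ≠ L, R ≠ U, cosθ ≠ 0, cosφ ≠ 0, and h(R) ≠ 0. Let w = (m/(d1·cosθ)) • N1 + (1/(d2·cosφ)) • N2 − (m/d1 + 2/(d1+d2)) • L̂R − (1/d2 + 2/(d1+d2)) • ÛR and let B denote the continuous bilinear map (1/h(R)) · (the second Fréchet derivative of h at R). Then the spatial relative growth ξ_s(Δ) := (h(R + Δ) − h(R))/h(R) satisfies ξ_s(Δ) − ⟪w, Δ⟫ − (1/2)·B(Δ, Δ) = o(‖Δ‖²) as Δ → 0 (in the Asymptotics.IsLittleO sense). -/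
open scoped RealInnerProductSpace Topology

/-- Second-order Taylor expansion with little-o remainder for a `C²` function. -/
theorem taylor2_aux {E F : Type*} [NormedAddCommGroup E] [NormedSpace ℝ E]
    [NormedAddCommGroup F] [NormedSpace ℝ F] {f : E → F} {x : E}
    (hf : ContDiffAt ℝ 2 f x) :
    (fun v => f (x + v) - f x - fderiv ℝ f x v - (1/2 : ℝ) • fderiv ℝ (fderiv ℝ f) x v v)
      =o[𝓝 0] (fun v => ‖v‖ ^ 2) := by
  set f' : E → (E →L[ℝ] F) := fderiv ℝ f with hf'def
  set f'' : E →L[ℝ] E →L[ℝ] F := fderiv ℝ f' x with hf''def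
  have hsymm : ∀ u v, f'' u v = f'' v u := fun u v =>
    (hf.isSymmSndFDerivAt (by simp [minSmoothness_of_isRCLikeNormedField])).eq u v
  have hdiff : ∀ᶠ y in 𝓝 x, DifferentiableAt ℝ f y :=
    (hf.eventually (by simp)).mono fun y hy => hy.differentiableAt two_ne_zero
  have h2 : HasFDerivAt f' f'' x :=
    ((hf.fderiv_right (m := 1) (le_refl 2)).differentiableAt one_ne_zero).hasFDerivAt
  rw [Asymptotics.isLittleO_iff]
  intro ε hε
  have hlo : ∀ᶠ y in 𝓝 x, ‖f' y - f' x - f'' (y - x)‖ ≤ ε * ‖y - x‖ := by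
    have := (Asymptotics.isLittleO_iff.1 h2.isLittleO) hε
    filter_upwards [this] with y hy using by simpa using hy
  obtain ⟨δ, hδpos, hδ⟩ := Metric.eventually_nhds_iff_ball.1 (hdiff.and hlo)
  rw [Metric.eventually_nhds_iff_ball]
  refine ⟨δ, hδpos, fun v hv => ?_⟩
  have hvδ : ‖v‖ < δ := by simpa using hv
  set g : E → F := fun y => f y - f' x (y - x) - (1/2 : ℝ) • f'' (y - x) (y - x) with hgdef
  set s : Set E := segment ℝ x (x + v) with hsdef
  have hmem : ∀ y ∈ s, ‖y - x‖ ≤ ‖v‖ := by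
    intro y hy
    rw [hsdef, segment_eq_image'] at hy
    obtain ⟨t, ht, rfl⟩ := hy
    simp only [add_sub_cancel_left]
    rw [norm_smul, Real.norm_eq_abs, abs_of_nonneg ht.1]
    exact mul_le_of_le_one_left (norm_nonneg v) ht.2
  have hball : ∀ y ∈ s, y ∈ Metric.ball x δ := fun y hy => by
    rw [Metric.mem_ball, dist_eq_norm]; exact lt_of_le_of_lt (hmem y hy) hvδ
  have hgderiv : ∀ y ∈ s, HasFDerivWithinAt g (f' y - f' x - f'' (y - x)) s y := by
    intro y hy
    have hdy : HasFDerivAt f (f' y) y := (hδ y (hball y hy)).1.hasFDerivAt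
    have l2 : HasFDerivAt (fun z => f' x (z - x)) (f' x) y := by
      have := ((f' x).hasFDerivAt (x := y - x)).comp y ((hasFDerivAt_id y).sub_const x)
      rw [ContinuousLinearMap.comp_id] at this
      exact this
    have l3 : HasFDerivAt (fun z => f'' (z - x) (z - x))
        ((f''.isBoundedBilinearMap.deriv (y - x, y - x)).comp
          ((ContinuousLinearMap.id ℝ E).prod (ContinuousLinearMap.id ℝ E))) y := by
      have hb := f''.isBoundedBilinearMap.hasFDerivAt (y - x, y - x)
      have hp : HasFDerivAt (fun z : E => (z - x, z - x))
          ((ContinuousLinearMap.id ℝ E).prod (ContinuousLinearMap.id ℝ E)) y :=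
        HasFDerivAt.prodMk ((hasFDerivAt_id y).sub_const x) ((hasFDerivAt_id y).sub_const x)
      exact hb.comp y hp
    have hg : HasFDerivAt g (f' y - f' x - (1/2 : ℝ) •
        ((f''.isBoundedBilinearMap.deriv (y - x, y - x)).comp
          ((ContinuousLinearMap.id ℝ E).prod (ContinuousLinearMap.id ℝ E)))) y :=
      (hdy.sub l2).sub (l3.const_smul (1/2 : ℝ))
    have heq : (f' y - f' x - (1/2 : ℝ) •
        ((f''.isBoundedBilinearMap.deriv (y - x, y - x)).comp
          ((ContinuousLinearMap.id ℝ E).prod (ContinuousLinearMap.id ℝ E))))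
        = f' y - f' x - f'' (y - x) := by
      ext u
      simp only [ContinuousLinearMap.sub_apply, ContinuousLinearMap.smul_apply,
        ContinuousLinearMap.coe_comp', Function.comp_apply, ContinuousLinearMap.prod_apply,
        ContinuousLinearMap.coe_id', id_eq, IsBoundedBilinearMap.deriv_apply]
      rw [hsymm u (y - x)]
      module
    rw [heq] at hg
    exact hg.hasFDerivWithinAt
  have hbound : ∀ y ∈ s, ‖f' y - f' x - f'' (y - x)‖ ≤ ε * ‖v‖ := fun y hy =>
    le_trans (hδ y (hball y hy)).2
      (mul_le_mul_of_nonneg_left (hmem y hy) hε.le)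
  have hconv : Convex ℝ s := convex_segment _ _
  have hxmem : x ∈ s := left_mem_segment ℝ x (x + v)
  have hymem : x + v ∈ s := right_mem_segment ℝ x (x + v)
  have := hconv.norm_image_sub_le_of_norm_hasFDerivWithin_le hgderiv hbound hxmem hymem
  have hgx : g x = f x := by simp [hgdef]
  have hgxv : g (x + v) = f (x + v) - f' x v - (1/2 : ℝ) • f'' v v := by
    simp only [hgdef, add_sub_cancel_left]
  rw [hgx, hgxv] at this
  calc ‖f (x + v) - f x - f' x v - (1/2 : ℝ) • f'' v v‖
      = ‖f (x + v) - f' x v - (1/2 : ℝ) • f'' v v - f x‖ := by congr 1; abel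
    _ ≤ ε * ‖v‖ * ‖x + v - x‖ := this
    _ = ε * ‖v‖ ^ 2 := by rw [add_sub_cancel_left]; ring
    _ = ε * ‖‖v‖ ^ 2‖ := by rw [norm_pow, norm_norm]

/-- derivative of `x ↦ ‖x - c‖` at a point `R ≠ c`. -/
theorem hasFDerivAt_norm_sub_aux {E : Type*} [NormedAddCommGroup E] [InnerProductSpace ℝ E]
    (c R : E) (hR : R ≠ c) :
    HasFDerivAt (fun x => ‖x - c‖) ((‖R - c‖)⁻¹ • innerSL ℝ (R - c)) R := by
  have h0 : R - c ≠ 0 := sub_ne_zero.2 hR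
  have hn : ‖R - c‖ ≠ 0 := norm_ne_zero_iff.2 h0
  have hsq : HasFDerivAt (fun x => ‖x - c‖ ^ 2)
      (2 • ((innerSL ℝ (R - c)).comp (ContinuousLinearMap.id ℝ E))) R :=
    ((hasFDerivAt_id R).sub_const c).norm_sq
  have hs : HasDerivAt Real.sqrt (1 / (2 * Real.sqrt (‖R - c‖ ^ 2))) (‖R - c‖ ^ 2) :=
    Real.hasDerivAt_sqrt (by positivity)
  have hcomp := hs.comp_hasFDerivAt R hsq
  have heqf : (fun x => Real.sqrt (‖x - c‖ ^ 2)) = fun x => ‖x - c‖ := by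
    funext x; rw [Real.sqrt_sq (norm_nonneg _)]
  rw [show Real.sqrt (‖R - c‖ ^ 2) = ‖R - c‖ from Real.sqrt_sq (norm_nonneg _)] at hcomp
  have : HasFDerivAt (fun x => ‖x - c‖)
      ((1 / (2 * ‖R - c‖)) • (2 • ((innerSL ℝ (R - c)).comp (ContinuousLinearMap.id ℝ E)))) R := by
    rw [← heqf]; exact hcomp
  convert this using 1
  ext u
  simp only [ContinuousLinearMap.smul_apply, ContinuousLinearMap.coe_smul',
    Pi.smul_apply, ContinuousLinearMap.coe_comp', Function.comp_apply,
    ContinuousLinearMap.coe_id', id_eq, smul_eq_mul, two_smul,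
    ContinuousLinearMap.add_apply]
  field_simp
  ring

theorem alg_aux (q p F W : ℝ) (h0 : q ≠ 0) :
    (p - q) / q - W - 1 / 2 * (1 / q * F) = 1 / q * (p - q - q * W - (1/2 : ℝ) * F) := by
  field_simp

set_option maxHeartbeats 2000000 in
/-- Second-order spatial expansion of the relative channel-gain variation (Lemma 1):
`ξ_s(Δ) = ⟪w, Δ⟫ + (1/2)·B(Δ,Δ) + o(‖Δ‖²)` as `Δ → 0`, where `w` is the stated
gradient-coefficient vector and `B` is the normalized second Fréchet derivative of `h` at `R`. -/
theorem lambertian_gain_second_order_spatial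
    (L U N1 N2 : EuclideanSpace ℝ (Fin 3))
    (hN1 : ‖N1‖ = 1) (hN2 : ‖N2‖ = 1)
    (m : ℕ) (hm : 1 ≤ m)
    (h : EuclideanSpace ℝ (Fin 3) → ℝ)
    (hdef : ∀ R, h R =
      (⟪N1, R - L⟫ / ‖R - L‖) ^ m * (⟪N2, R - U⟫ / ‖R - U‖) / (‖R - L‖ + ‖R - U‖) ^ 2)
    (R : EuclideanSpace ℝ (Fin 3)) (hRL : R ≠ L) (hRU : R ≠ U)
    (d1 d2 : ℝ) (hd1 : d1 = ‖R - L‖) (hd2 : d2 = ‖R - U‖)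
    (LR UR : EuclideanSpace ℝ (Fin 3)) (hLR : LR = (1 / d1) • (R - L)) (hUR : UR = (1 / d2) • (R - U))
    (cosθ cosφ : ℝ) (hcosθ : cosθ = ⟪N1, LR⟫) (hcosφ : cosφ = ⟪N2, UR⟫)
    (hθ : cosθ ≠ 0) (hφ : cosφ ≠ 0) (hhR : h R ≠ 0)
    (w : EuclideanSpace ℝ (Fin 3))
    (hw : w = ((m : ℝ) / (d1 * cosθ)) • N1 + (1 / (d2 * cosφ)) • N2
        - ((m : ℝ) / d1 + 2 / (d1 + d2)) • LR
        - (1 / d2 + 2 / (d1 + d2)) • UR)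
    (B : EuclideanSpace ℝ (Fin 3) → EuclideanSpace ℝ (Fin 3) → ℝ)
    (hB : ∀ Δ₁ Δ₂, B Δ₁ Δ₂ = (1 / h R) * fderiv ℝ (fderiv ℝ h) R Δ₁ Δ₂)
    (ξs : EuclideanSpace ℝ (Fin 3) → ℝ)
    (hξs : ∀ Δ, ξs Δ = (h (R + Δ) - h R) / h R) :
    (fun Δ => ξs Δ - ⟪w, Δ⟫ - (1 / 2) * B Δ Δ) =o[𝓝 0] (fun Δ => ‖Δ‖ ^ 2) := by
  have hL0 : R - L ≠ 0 := sub_ne_zero.2 hRL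
  have hU0 : R - U ≠ 0 := sub_ne_zero.2 hRU
  have hd1pos : (0:ℝ) < d1 := hd1 ▸ norm_pos_iff.2 hL0
  have hd2pos : (0:ℝ) < d2 := hd2 ▸ norm_pos_iff.2 hU0
  have hd1ne : d1 ≠ 0 := ne_of_gt hd1pos
  have hd2ne : d2 ≠ 0 := ne_of_gt hd2pos
  have hd12ne : d1 + d2 ≠ 0 := by positivity
  have hEd1 : ‖R - L‖ = d1 := hd1.symm
  have hEd2 : ‖R - U‖ = d2 := hd2.symm
  have hip1 : ⟪N1, R - L⟫ = d1 * cosθ := by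
    rw [hcosθ, hLR, real_inner_smul_right]
    field_simp
  have hip2 : ⟪N2, R - U⟫ = d2 * cosφ := by
    rw [hcosφ, hUR, real_inner_smul_right]
    field_simp
  -- h is C² at R
  have hcont : ContDiffAt ℝ 2 h R := by
    have hsub1 : ContDiffAt ℝ 2 (fun x : EuclideanSpace ℝ (Fin 3) => x - L) R :=
      contDiffAt_id.sub contDiffAt_const
    have hsub2 : ContDiffAt ℝ 2 (fun x : EuclideanSpace ℝ (Fin 3) => x - U) R :=
      contDiffAt_id.sub contDiffAt_const
    have hA : ContDiffAt ℝ 2 (fun x : EuclideanSpace ℝ (Fin 3) => ⟪N1, x - L⟫) R :=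
      ContDiffAt.inner ℝ contDiffAt_const hsub1
    have hBc : ContDiffAt ℝ 2 (fun x : EuclideanSpace ℝ (Fin 3) => ⟪N2, x - U⟫) R :=
      ContDiffAt.inner ℝ contDiffAt_const hsub2
    have hn1 : ContDiffAt ℝ 2 (fun x : EuclideanSpace ℝ (Fin 3) => ‖x - L‖) R := hsub1.norm ℝ hL0
    have hn2 : ContDiffAt ℝ 2 (fun x : EuclideanSpace ℝ (Fin 3) => ‖x - U‖) R := hsub2.norm ℝ hU0
    have h1 : ‖R - L‖ ≠ 0 := norm_ne_zero_iff.2 hL0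
    have h2 : ‖R - U‖ ≠ 0 := norm_ne_zero_iff.2 hU0
    have h12 : ((‖R - L‖ + ‖R - U‖) ^ 2 : ℝ) ≠ 0 := by positivity
    exact ContDiffAt.congr_of_eventuallyEq
      ((((hA.div hn1 h1).pow m).mul (hBc.div hn2 h2)).div ((hn1.add hn2).pow 2) h12)
      (Filter.Eventually.of_forall hdef)
  -- explicit first derivative of h at R
  have hd1n : ‖R - L‖ ≠ 0 := norm_ne_zero_iff.2 hL0
  have hd2n : ‖R - U‖ ≠ 0 := norm_ne_zero_iff.2 hU0
  have hd12n : (0:ℝ) < ‖R - L‖ + ‖R - U‖ := by positivity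
  have hn1 := hasFDerivAt_norm_sub_aux L R hRL
  have hn2 := hasFDerivAt_norm_sub_aux U R hRU
  have hA : HasFDerivAt (fun x : EuclideanSpace ℝ (Fin 3) => ⟪N1, x - L⟫) (innerSL ℝ N1) R := by
    have := ((innerSL ℝ N1).hasFDerivAt (x := R - L)).comp R ((hasFDerivAt_id R).sub_const L)
    rw [ContinuousLinearMap.comp_id] at this
    exact this
  have hBd : HasFDerivAt (fun x : EuclideanSpace ℝ (Fin 3) => ⟪N2, x - U⟫) (innerSL ℝ N2) R := by
    have := ((innerSL ℝ N2).hasFDerivAt (x := R - U)).comp R ((hasFDerivAt_id R).sub_const U)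
    rw [ContinuousLinearMap.comp_id] at this
    exact this
  have hinv1 := (hasDerivAt_inv hd1n).comp_hasFDerivAt R hn1
  have hinv2 := (hasDerivAt_inv hd2n).comp_hasFDerivAt R hn2
  have hq1 := hA.mul hinv1
  have hq1m := (hasDerivAt_pow m (⟪N1, R - L⟫ * (‖R - L‖)⁻¹)).comp_hasFDerivAt R hq1
  have hq2 := hBd.mul hinv2
  have hprod := hq1m.mul hq2
  have hden := (hasDerivAt_pow 2 (‖R - L‖ + ‖R - U‖)).comp_hasFDerivAt R (hn1.add hn2)
  have hdeninv := (hasDerivAt_inv (pow_ne_zero 2 (ne_of_gt hd12n))).comp_hasFDerivAt R hden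
  have hfull := hprod.mul hdeninv
  have hfd := HasFDerivAt.congr_of_eventuallyEq (f₁ := h) hfull (Filter.Eventually.of_forall
    (fun x => by simp only [hdef, div_eq_mul_inv, Function.comp, Pi.mul_apply, Pi.add_apply, Function.comp_apply]))
  have hpowθ : cosθ ^ m = cosθ ^ (m - 1) * cosθ := by
    rw [← pow_succ, Nat.sub_add_cancel hm]
  have key : ∀ Δ : EuclideanSpace ℝ (Fin 3), fderiv ℝ h R Δ = h R * ⟪w, Δ⟫ := by
    intro Δ
    rw [hfd.fderiv]
    simp only [ContinuousLinearMap.add_apply, ContinuousLinearMap.smul_apply,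
      ContinuousLinearMap.coe_smul', Pi.smul_apply, smul_eq_mul,
      ContinuousLinearMap.coe_comp', Function.comp_apply, ContinuousLinearMap.coe_id', id_eq,
      innerSL_apply_apply, Pi.mul_apply, Pi.add_apply]
    rw [hdef R, hw]
    simp only [inner_add_left, inner_sub_left, real_inner_smul_left, hLR, hUR]
    rw [hEd1, hEd2, hip1, hip2]
    rw [show d1 * cosθ * d1⁻¹ = cosθ by field_simp,
        show d2 * cosφ * d2⁻¹ = cosφ by field_simp]
    rw [show d1 * cosθ / d1 = cosθ by field_simp,
        show d2 * cosφ / d2 = cosφ by field_simp]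
    rw [hpowθ]
    generalize cosθ ^ (m - 1) = C
    generalize (m : ℝ) = M
    generalize ⟪N1, Δ⟫ = X1
    generalize ⟪N2, Δ⟫ = X2
    generalize ⟪R, Δ⟫ = Y
    generalize ⟪L, Δ⟫ = Y1
    generalize ⟪U, Δ⟫ = Y2
    norm_num
    field_simp
    ring
  -- assemble
  have T := taylor2_aux hcont
  have heq : (fun Δ => ξs Δ - ⟪w, Δ⟫ - (1 / 2) * B Δ Δ)
      = fun Δ => (1 / h R) * (h (R + Δ) - h R - fderiv ℝ h R Δ
          - (1/2 : ℝ) • fderiv ℝ (fderiv ℝ h) R Δ Δ) := by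
    funext Δ
    rw [hξs, hB, key Δ, smul_eq_mul]
    exact alg_aux (h R) (h (R + Δ)) (fderiv ℝ (fderiv ℝ h) R Δ Δ) ⟪w, Δ⟫ hhR
  rw [heq]
  exact T.const_mul_left _
end

section
/- First-order temporal variation of the channel gain under receiver motion (Lemma 2, first order; Appendix B): assume R ≠ L, R ≠ U and cosφ ≠ 0. Then g is differentiable at t = 0 and g'(0) = h(R) · ⟪(1/d2 + 2/(d1+d2)) • ÛR − (1/(d2·cosφ)) • N2, v⟫ (this is the first-order coefficient of the temporal variation; the paper's Eq. (13) states the same expression up to an overall sign). -/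
open scoped RealInnerProductSpace

/-- First-order temporal variation of the channel gain under receiver motion
(Lemma 2, first order): `g` is differentiable at `t = 0` and
`g'(0) = h(R) · ⟪(1/d2 + 2/(d1+d2)) • ÛR − (1/(d2·cosφ)) • N2, v⟫`. -/
theorem lambertian_gain_temporal_first_order
    (L U N1 N2 : EuclideanSpace ℝ (Fin 3))
    (hN1 : ‖N1‖ = 1) (hN2 : ‖N2‖ = 1)
    (m : ℕ) (hm : 1 ≤ m)
    (h : EuclideanSpace ℝ (Fin 3) → ℝ)
    (hdef : ∀ R, h R =
      (⟪N1, R - L⟫ / ‖R - L‖) ^ m * (⟪N2, R - U⟫ / ‖R - U‖) / (‖R - L‖ + ‖R - U‖) ^ 2)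
    (R : EuclideanSpace ℝ (Fin 3)) (hRL : R ≠ L) (hRU : R ≠ U)
    (d1 d2 : ℝ) (hd1 : d1 = ‖R - L‖) (hd2 : d2 = ‖R - U‖)
    (LR UR : EuclideanSpace ℝ (Fin 3)) (hLR : LR = (1 / d1) • (R - L)) (hUR : UR = (1 / d2) • (R - U))
    (cosθ cosφ : ℝ) (hcosθ : cosθ = ⟪N1, LR⟫) (hcosφ : cosφ = ⟪N2, UR⟫)
    (hφ : cosφ ≠ 0)
    (v : EuclideanSpace ℝ (Fin 3))
    (g : ℝ → ℝ)
    (hg : ∀ t, g t =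
      (⟪N1, R - L⟫ / ‖R - L‖) ^ m * (⟪N2, R - U - t • v⟫ / ‖R - U - t • v‖)
        / (‖R - L‖ + ‖R - U - t • v‖) ^ 2) :
    DifferentiableAt ℝ g 0 ∧
      deriv g 0 = h R * ⟪(1 / d2 + 2 / (d1 + d2)) • UR - (1 / (d2 * cosφ)) • N2, v⟫ := by
  have hd1pos : (0:ℝ) < d1 := by
    rw [hd1]; exact norm_pos_iff.mpr (sub_ne_zero.mpr hRL)
  have hd2pos : (0:ℝ) < d2 := by
    rw [hd2]; exact norm_pos_iff.mpr (sub_ne_zero.mpr hRU)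
  have hd2ne : d2 ≠ 0 := ne_of_gt hd2pos
  have hdsum : (0:ℝ) < d1 + d2 := by positivity
  set C : ℝ := (⟪N1, R - L⟫ / ‖R - L‖) ^ m with hC
  set a : ℝ := ⟪N2, R - U⟫ with ha
  set b : ℝ := ⟪N2, v⟫ with hb
  set c : ℝ := ⟪R - U, v⟫ with hc
  set q : ℝ := ⟪v, v⟫ with hq
  set k : ℝ := ⟪R - U, R - U⟫ with hk
  -- the quadratic inside the square root
  set f : ℝ → ℝ := fun t => k - 2 * t * c + t ^ 2 * q with hf
  have hf0 : f 0 = k := by simp [hf]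
  have hkd2 : k = d2 ^ 2 := by
    rw [hk, hd2, real_inner_self_eq_norm_sq]
  have hkpos : (0:ℝ) < k := by rw [hkd2]; positivity
  have hsqrtk : Real.sqrt k = d2 := by
    rw [hkd2, Real.sqrt_sq hd2pos.le]
  -- norm as sqrt of the quadratic
  have hnorm : ∀ t : ℝ, ‖R - U - t • v‖ = Real.sqrt (f t) := by
    intro t
    rw [norm_eq_sqrt_real_inner]
    congr 1
    simp only [hf, hk, hc, hq, inner_sub_sub_self, real_inner_smul_left,
      real_inner_smul_right, real_inner_comm (t • v) (R - U), real_inner_comm v (R - U)]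
    ring
  -- inner product as affine function
  have hinner : ∀ t : ℝ, ⟪N2, R - U - t • v⟫ = a - t * b := by
    intro t
    rw [inner_sub_right, real_inner_smul_right]
  -- derivative of f
  have hfd : HasDerivAt f (-(2 * c)) 0 := by
    have h1 : HasDerivAt (fun t : ℝ => 2 * t * c) (2 * c) 0 := by
      simpa using (((hasDerivAt_id (0:ℝ)).const_mul 2).mul_const c)
    have h2 : HasDerivAt (fun t : ℝ => t ^ 2 * q) 0 0 := by
      simpa using ((hasDerivAt_pow 2 (0:ℝ)).mul_const q)
    have h3 := ((hasDerivAt_const (0:ℝ) k).sub h1).add h2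
    exact h3.congr_deriv (by ring)
  have hfne : f 0 ≠ 0 := by rw [hf0]; exact ne_of_gt hkpos
  have hsd : HasDerivAt (fun t => Real.sqrt (f t)) (-(2 * c) / (2 * Real.sqrt (f 0))) 0 :=
    hfd.sqrt hfne
  have hs0 : Real.sqrt (f 0) = d2 := by rw [hf0, hsqrtk]
  set n' : ℝ := -(2 * c) / (2 * d2) with hn'
  have hsd' : HasDerivAt (fun t => Real.sqrt (f t)) n' 0 := by
    rwa [hs0] at hsd
  -- numerator affine function derivative
  have hA : HasDerivAt (fun t : ℝ => a - t * b) (-b) 0 := by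
    simpa using ((hasDerivAt_id (0:ℝ)).mul_const b).const_sub a
  -- quotient
  have hs0ne : Real.sqrt (f 0) ≠ 0 := by rw [hs0]; exact hd2ne
  have hF := hA.div hsd' hs0ne
  -- denominator
  set dL : ℝ := ‖R - L‖ with hdL
  have hdLd1 : dL = d1 := hd1.symm
  have hD0 : dL + Real.sqrt (f 0) = d1 + d2 := by rw [hs0, hdLd1]
  have hDen : HasDerivAt (fun t => (dL + Real.sqrt (f t)) ^ 2)
      (2 * (dL + Real.sqrt (f 0)) ^ 1 * (0 + n')) 0 :=
    (((hasDerivAt_const (0:ℝ) dL).add hsd')).pow 2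
  have hDen0ne : (dL + Real.sqrt (f 0)) ^ 2 ≠ 0 := by
    rw [hD0]; positivity
  have hG := (hF.div hDen hDen0ne).const_mul C
  -- g agrees with this function
  have hgfun : g = fun t => C * ((a - t * b) / Real.sqrt (f t) / (dL + Real.sqrt (f t)) ^ 2) := by
    funext t
    rw [hg t, hinner t, hnorm t]
    ring
  rw [hgfun]
  refine ⟨hG.differentiableAt, ?_⟩
  rw [show deriv (fun t => C * ((a - t * b) / Real.sqrt (f t) / (dL + Real.sqrt (f t)) ^ 2)) 0 = _ from hG.deriv]
  simp only [Pi.div_apply]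
  -- now pure algebra
  have hacos : a = d2 * cosφ := by
    rw [hcosφ, hUR, real_inner_smul_right, ← ha]
    field_simp
  have hRHS : ⟪(1 / d2 + 2 / (d1 + d2)) • UR - (1 / (d2 * cosφ)) • N2, v⟫
      = (1 / d2 + 2 / (d1 + d2)) * ((1 / d2) * c) - (1 / (d2 * cosφ)) * b := by
    rw [inner_sub_left, real_inner_smul_left, real_inner_smul_left, hUR,
      real_inner_smul_left, ← hc, ← hb]
  have hhR : h R = C * (d2 * cosφ / d2) / (d1 + d2) ^ 2 := by
    rw [hdef R, ← hC, ← hd2, ← hacos, ← ha, ← hdL, hdLd1]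
  rw [hRHS, hhR, hs0, hdLd1, hacos]
  simp only [hn']
  have hdsumne : d1 + d2 ≠ 0 := ne_of_gt hdsum
  field_simp
  ring
end

section
/- Second-order temporal expansion of the relative channel-gain variation (Lemma 2): assume R ≠ L, R ≠ U, cosφ ≠ 0 and h(R) ≠ 0. Let a = ⟪(1/d2 + 2/(d1+d2)) • ÛR − (1/(d2·cosφ)) • N2, v⟫ and b = (the second derivative of g at 0) / h(R). Then the temporal relative growth ξ_t(t) := (g(t) − g(0))/g(0) satisfies ξ_t(t) − a·t − (b/2)·t² = o(t²) as t → 0 (in the Asymptotics.IsLittleO sense). -/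
open scoped RealInnerProductSpace Topology

open Asymptotics Filter in
lemma second_order_aux_lgtso {f G : ℝ → ℝ} {c : ℝ}
    (hfG : ∀ᶠ t in 𝓝 (0:ℝ), HasDerivAt f (G t) t)
    (hG : HasDerivAt G c 0) :
    (fun t => f t - f 0 - G 0 * t - c / 2 * t ^ 2) =o[𝓝 0] (fun t => t ^ 2) := by
  set φ : ℝ → ℝ := fun t => f t - f 0 - G 0 * t - c / 2 * t ^ 2 with hφdef
  set ψ : ℝ → ℝ := fun t => G t - G 0 - c * t with hψdef
  have hφ' : ∀ᶠ t in 𝓝 (0:ℝ), HasDerivAt φ (ψ t) t := by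
    filter_upwards [hfG] with t ht
    have h1 : HasDerivAt (fun t : ℝ => G 0 * t) (G 0) t := by
      simpa using (hasDerivAt_id t).const_mul (G 0)
    have h2 : HasDerivAt (fun t : ℝ => c / 2 * t ^ 2) (c * t) t := by
      have := (hasDerivAt_pow 2 t).const_mul (c / 2)
      refine this.congr_deriv ?_
      push_cast; ring
    exact ((ht.sub_const (f 0)).sub h1).sub h2
  have hψo : ψ =o[𝓝 (0:ℝ)] (fun t => t) := by
    have h4 := hasDerivAt_iff_isLittleO.1 hG
    simp only [sub_zero, smul_eq_mul] at h4
    refine h4.congr' ?_ (by rfl)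
    filter_upwards with t
    simp only [hψdef]; ring
  rw [isLittleO_iff]
  intro ε hε
  have hb := hψo.def hε
  obtain ⟨δ, hδ, hδ'⟩ := Metric.eventually_nhds_iff.1 (hφ'.and hb)
  have hball : Metric.ball (0:ℝ) δ ∈ 𝓝 (0:ℝ) := Metric.ball_mem_nhds _ hδ
  filter_upwards [hball] with t ht
  have htabs : |t| < δ := by simpa [Real.dist_eq] using ht
  have hmem : ∀ x ∈ Set.uIcc (0:ℝ) t, |x| ≤ |t| := by
    intro x hx
    rw [Set.uIcc_eq_union] at hx
    rcases hx with hx | hx <;> rcases hx with ⟨h1, h2⟩ <;> rw [abs_le] <;>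
      constructor <;> nlinarith [abs_nonneg t, le_abs_self t, neg_abs_le t]
  have key : ‖φ t - φ 0‖ ≤ (ε * |t|) * ‖t - 0‖ := by
    apply Convex.norm_image_sub_le_of_norm_hasDerivWithin_le
      (f' := ψ) (fun x hx => ?_) (fun x hx => ?_) (convex_uIcc 0 t)
      Set.left_mem_uIcc Set.right_mem_uIcc
    · have hxδ : dist x 0 < δ := by
        rw [Real.dist_eq, sub_zero]; exact lt_of_le_of_lt (hmem x hx) htabs
      exact (hδ' hxδ).1.hasDerivWithinAt
    · have hxδ : dist x 0 < δ := by
        rw [Real.dist_eq, sub_zero]; exact lt_of_le_of_lt (hmem x hx) htabs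
      calc ‖ψ x‖ ≤ ε * ‖x‖ := (hδ' hxδ).2
        _ ≤ ε * |t| := by
            rw [Real.norm_eq_abs]; exact mul_le_mul_of_nonneg_left (hmem x hx) hε.le
  have hφ0 : φ 0 = 0 := by simp [hφdef]
  rw [hφ0, sub_zero, sub_zero] at key
  calc ‖φ t‖ ≤ ε * |t| * ‖t‖ := key
    _ = ε * ‖t ^ 2‖ := by rw [Real.norm_eq_abs, Real.norm_eq_abs, abs_pow]; ring

/-- Second-order temporal expansion of the relative channel-gain variation (Lemma 2):
`ξ_t(t) = a·t + (b/2)·t² + o(t²)` as `t → 0`, where `a` is the stated first-order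
coefficient and `b` is the normalized second derivative of `g` at `0`. -/
theorem lambertian_gain_temporal_second_order
    (L U N1 N2 : EuclideanSpace ℝ (Fin 3))
    (hN1 : ‖N1‖ = 1) (hN2 : ‖N2‖ = 1)
    (m : ℕ) (hm : 1 ≤ m)
    (h : EuclideanSpace ℝ (Fin 3) → ℝ)
    (hdef : ∀ R, h R =
      (⟪N1, R - L⟫ / ‖R - L‖) ^ m * (⟪N2, R - U⟫ / ‖R - U‖) / (‖R - L‖ + ‖R - U‖) ^ 2)
    (R : EuclideanSpace ℝ (Fin 3)) (hRL : R ≠ L) (hRU : R ≠ U)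
    (d1 d2 : ℝ) (hd1 : d1 = ‖R - L‖) (hd2 : d2 = ‖R - U‖)
    (LR UR : EuclideanSpace ℝ (Fin 3)) (hLR : LR = (1 / d1) • (R - L)) (hUR : UR = (1 / d2) • (R - U))
    (cosθ cosφ : ℝ) (hcosθ : cosθ = ⟪N1, LR⟫) (hcosφ : cosφ = ⟪N2, UR⟫)
    (hφ : cosφ ≠ 0) (hhR : h R ≠ 0)
    (v : EuclideanSpace ℝ (Fin 3))
    (g : ℝ → ℝ)
    (hg : ∀ t, g t =
      (⟪N1, R - L⟫ / ‖R - L‖) ^ m * (⟪N2, R - U - t • v⟫ / ‖R - U - t • v‖)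
        / (‖R - L‖ + ‖R - U - t • v‖) ^ 2)
    (a b : ℝ)
    (ha : a = ⟪(1 / d2 + 2 / (d1 + d2)) • UR - (1 / (d2 * cosφ)) • N2, v⟫)
    (hb : b = deriv (deriv g) 0 / h R)
    (ξt : ℝ → ℝ)
    (hξt : ∀ t, ξt t = (g t - g 0) / g 0) :
    (fun t => ξt t - a * t - (b / 2) * t ^ 2) =o[𝓝 0] (fun t => t ^ 2) := by
  have hd1pos : (0:ℝ) < d1 := by
    rw [hd1]; exact norm_pos_iff.mpr (sub_ne_zero.mpr hRL)
  have hd2pos : (0:ℝ) < d2 := by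
    rw [hd2]; exact norm_pos_iff.mpr (sub_ne_zero.mpr hRU)
  set c0 : ℝ := (⟪N1, R - L⟫ / ‖R - L‖) ^ m with hc0
  set B : ℝ := ⟪R - U, v⟫ with hB
  set P0 : ℝ := ⟪N2, R - U⟫ with hP0
  set Pv : ℝ := ⟪N2, v⟫ with hPv
  set q : ℝ → ℝ := fun t => d2 ^ 2 - 2 * B * t + ‖v‖ ^ 2 * t ^ 2 with hqdef
  set p : ℝ → ℝ := fun t => P0 - Pv * t with hpdef
  set q' : ℝ → ℝ := fun t => -(2 * B) + ‖v‖ ^ 2 * (2 * t) with hq'def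
  have hqt : ∀ t, q t = ‖R - U - t • v‖ ^ 2 := by
    intro t
    rw [hqdef, norm_sub_sq_real, real_inner_smul_right, norm_smul, ← hB, ← hd2,
      Real.norm_eq_abs, mul_pow, sq_abs]
    ring
  have hn : ∀ t, Real.sqrt (q t) = ‖R - U - t • v‖ := fun t => by
    rw [hqt t]; exact Real.sqrt_sq (norm_nonneg _)
  have hptt : ∀ t, p t = ⟪N2, R - U - t • v⟫ := by
    intro t
    rw [hpdef]
    simp only [inner_sub_right, real_inner_smul_right, ← hP0, ← hPv]
    ring
  set F : ℝ → ℝ := fun t => c0 * (p t / Real.sqrt (q t)) / (d1 + Real.sqrt (q t)) ^ 2 with hFdef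
  set G : ℝ → ℝ := fun t =>
    (c0 * ((-Pv * Real.sqrt (q t) - p t * (q' t / (2 * Real.sqrt (q t)))) / Real.sqrt (q t) ^ 2)
        * (d1 + Real.sqrt (q t)) ^ 2
      - c0 * (p t / Real.sqrt (q t))
        * (2 * (d1 + Real.sqrt (q t)) * (q' t / (2 * Real.sqrt (q t)))))
      / ((d1 + Real.sqrt (q t)) ^ 2) ^ 2 with hGdef
  have hgF : g = F := by
    funext t
    rw [hg t, hFdef]
    rw [← hptt t, ← hn t, ← hd1]
  have hq0pos : 0 < q 0 := by
    have : q 0 = d2 ^ 2 := by rw [hqdef]; norm_num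
    rw [this]; positivity
  have hqcont : Continuous q := by
    rw [hqdef]; fun_prop
  have hqqpos : ∀ᶠ t in 𝓝 (0:ℝ), 0 < q t := by
    have hopen : IsOpen {t : ℝ | 0 < q t} := isOpen_lt continuous_const hqcont
    exact hopen.mem_nhds hq0pos
  have hpdiff : ∀ t : ℝ, HasDerivAt p (-Pv) t := by
    intro t
    have := (hasDerivAt_const t P0).sub ((hasDerivAt_id t).const_mul Pv)
    rw [hpdef]
    refine this.congr_deriv ?_
    ring
  have hq'diff : ∀ t : ℝ, HasDerivAt q (q' t) t := by
    intro t
    have := ((hasDerivAt_const t (d2 ^ 2)).sub ((hasDerivAt_id t).const_mul (2 * B))).add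
      ((hasDerivAt_pow 2 t).const_mul (‖v‖ ^ 2))
    rw [hqdef, hq'def]
    refine this.congr_deriv ?_
    push_cast; ring
  have hFDeriv : ∀ t : ℝ, 0 < q t → HasDerivAt F (G t) t := by
    intro t ht
    have hs0 : Real.sqrt (q t) ≠ 0 := ne_of_gt (Real.sqrt_pos.mpr ht)
    have hD0 : d1 + Real.sqrt (q t) ≠ 0 :=
      ne_of_gt (add_pos_of_pos_of_nonneg hd1pos (Real.sqrt_nonneg _))
    have hA := (hpdiff t).div ((hq'diff t).sqrt (ne_of_gt ht)) hs0
    have hCA := hA.const_mul c0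
    have hD := ((hasDerivAt_const t d1).add ((hq'diff t).sqrt (ne_of_gt ht))).pow 2
    have hF := hCA.div hD (pow_ne_zero 2 hD0)
    rw [hFdef, hGdef]
    refine hF.congr_deriv ?_
    simp only [Pi.add_apply, Pi.pow_apply, Pi.div_apply]
    push_cast
    ring
  have hFGat : ∀ᶠ t in 𝓝 (0:ℝ), HasDerivAt g (G t) t := by
    filter_upwards [hqqpos] with t ht
    rw [hgF]
    exact hFDeriv t ht
  -- values at 0
  have hq0 : q 0 = d2 ^ 2 := by rw [hqdef]; norm_num
  have hs0 : Real.sqrt (q 0) = d2 := by rw [hq0]; exact Real.sqrt_sq hd2pos.le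
  have hsne : Real.sqrt (q 0) ≠ 0 := by rw [hs0]; exact hd2pos.ne'
  have hq'0 : q' 0 = -(2 * B) := by rw [hq'def]; norm_num
  have hcosφ' : cosφ = (1 / d2) * P0 := by
    rw [hcosφ, hUR, real_inner_smul_right, ← hP0]
  have hp0 : p 0 = d2 * cosφ := by
    rw [hpdef]
    simp only [mul_zero, sub_zero]
    rw [hcosφ']
    field_simp
  have hB_UR : ⟪UR, v⟫ = (1 / d2) * B := by
    rw [hUR, real_inner_smul_left, ← hB]
  have hg0hR : g 0 = h R := by
    rw [hg 0, hdef R, ← hc0]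
    simp only [zero_smul, sub_zero]
  have hg0ne : g 0 ≠ 0 := by rw [hg0hR]; exact hhR
  have haeq : a = (1 / d2 + 2 / (d1 + d2)) * ((1 / d2) * B) - (1 / (d2 * cosφ)) * Pv := by
    rw [ha, inner_sub_left, real_inner_smul_left, real_inner_smul_left, hB_UR, ← hPv]
  have hDne : d1 + d2 ≠ 0 := (add_pos hd1pos hd2pos).ne'
  have key1 : G 0 = a * g 0 := by
    rw [hGdef, hgF, hFdef]
    simp only [hs0, hp0, hq'0]
    rw [haeq]
    field_simp
    ring
  -- differentiability of G at 0
  have hSdiff : DifferentiableAt ℝ (fun t => Real.sqrt (q t)) 0 :=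
    ((hq'diff 0).sqrt hq0pos.ne').differentiableAt
  have hpD : DifferentiableAt ℝ p 0 := (hpdiff 0).differentiableAt
  have hq'D : DifferentiableAt ℝ q' 0 := by
    rw [hq'def]; fun_prop
  have hsne2 : (2:ℝ) * Real.sqrt (q 0) ≠ 0 := by
    rw [hs0]; positivity
  have hDne0 : d1 + Real.sqrt (q 0) ≠ 0 := by
    rw [hs0]; exact hDne
  have hn2 : DifferentiableAt ℝ (fun t => q' t / (2 * Real.sqrt (q t))) 0 :=
    hq'D.div ((differentiableAt_const 2).mul hSdiff) hsne2
  have hX : DifferentiableAt ℝ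
      (fun t => (-Pv * Real.sqrt (q t) - p t * (q' t / (2 * Real.sqrt (q t))))
        / Real.sqrt (q t) ^ 2) 0 :=
    (((differentiableAt_const (-Pv)).mul hSdiff).sub (hpD.mul hn2)).div
      (hSdiff.pow 2) (pow_ne_zero 2 hsne)
  have hGdiffAt : DifferentiableAt ℝ G 0 := by
    rw [hGdef]
    exact (((hX.const_mul c0).mul (((differentiableAt_const d1).add hSdiff).pow 2)).sub
      (((hpD.div hSdiff hsne).const_mul c0).mul
        (((differentiableAt_const 2).mul ((differentiableAt_const d1).add hSdiff)).mul hn2))).div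
      ((((differentiableAt_const d1).add hSdiff).pow 2).pow 2)
      (pow_ne_zero 2 (pow_ne_zero 2 hDne0))
  have hG0at : HasDerivAt G (deriv G 0) 0 := hGdiffAt.hasDerivAt
  have main := second_order_aux_lgtso hFGat hG0at
  have hdd : deriv (deriv g) 0 = deriv G 0 := by
    have hev : deriv g =ᶠ[𝓝 (0:ℝ)] G := by
      filter_upwards [hFGat] with t ht
      exact ht.deriv
    exact hev.deriv_eq
  have heq : (fun t => ξt t - a * t - (b / 2) * t ^ 2)
      = fun t => (1 / g 0) * (g t - g 0 - G 0 * t - deriv G 0 / 2 * t ^ 2) := by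
    funext t
    rw [hξt t, hb, hdd, ← hg0hR, key1]
    field_simp
  rw [heq]
  exact main.const_mul_left (1 / g 0)
end

section
/- Coherence interval length, non-split case (abstract form of Theorem 1, first case): let a, b, ξ ∈ ℝ with a ≠ 0, b ≠ 0, ξ > 0, and suppose a² ≤ 2·|b|·ξ. Put t₂ = −2a/b and S = {t ∈ ℝ : |a·t + (b/2)·t²| ≤ ξ}. Then S is a nonempty closed bounded interval, i.e., S = Set.Icc (sInf S) (sSup S), and its length satisfies sSup S − sInf S = |t₂| · Real.sqrt (1 + 4ξ/(|t₂|·|a|)). -/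
/-- Coherence interval length, non-split case (abstract Theorem 1, first case):
if `a² ≤ 2|b|ξ`, the set `S = {t : |a·t + (b/2)·t²| ≤ ξ}` is a nonempty closed
bounded interval of length `|t₂|·√(1 + 4ξ/(|t₂|·|a|))` where `t₂ = −2a/b`. -/
theorem coherence_interval_length_nonsplit
    (a b ξ : ℝ) (ha : a ≠ 0) (hb : b ≠ 0) (hξ : 0 < ξ)
    (hcase : a ^ 2 ≤ 2 * |b| * ξ)
    (t₂ : ℝ) (ht₂ : t₂ = -2 * a / b)
    (S : Set ℝ) (hS : S = {t : ℝ | |a * t + (b / 2) * t ^ 2| ≤ ξ}) :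
    S.Nonempty ∧ BddBelow S ∧ BddAbove S ∧ S = Set.Icc (sInf S) (sSup S) ∧
      sSup S - sInf S = |t₂| * Real.sqrt (1 + 4 * ξ / (|t₂| * |a|)) := by
  have hb' : 0 < |b| := abs_pos.2 hb
  have ha' : 0 < |a| := abs_pos.2 ha
  set D : ℝ := a ^ 2 + 2 * |b| * ξ with hDdef
  have hD : 0 < D := by positivity
  set s : ℝ := Real.sqrt D with hsdef
  have hs2 : s ^ 2 = D := Real.sq_sqrt hD.le
  have hs0 : 0 < s := Real.sqrt_pos.2 hD
  set lo : ℝ := -a / b - s / |b| with hlodef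
  set hi : ℝ := -a / b + s / |b| with hhidef
  have hsb : 0 < s / |b| := div_pos hs0 hb'
  have hlohi : lo < hi := by rw [hlodef, hhidef]; linarith
  have key : ∀ t : ℝ, |a * t + b / 2 * t ^ 2| ≤ ξ ↔ (b * t + a) ^ 2 ≤ D := by
    intro t
    have h2b : 2 * |b| * |a * t + b / 2 * t ^ 2| = |(b * t + a) ^ 2 - a ^ 2| := by
      have : (b * t + a) ^ 2 - a ^ 2 = 2 * b * (a * t + b / 2 * t ^ 2) := by ring
      rw [this, abs_mul, abs_mul]
      norm_num
    constructor
    · intro h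
      have h1 : 2 * |b| * |a * t + b / 2 * t ^ 2| ≤ 2 * |b| * ξ :=
        mul_le_mul_of_nonneg_left h (by positivity)
      rw [h2b] at h1
      have := (abs_le.1 h1).2
      rw [hDdef]; linarith
    · intro h
      have hnn : 0 ≤ (b * t + a) ^ 2 := sq_nonneg _
      have h1 : |(b * t + a) ^ 2 - a ^ 2| ≤ 2 * |b| * ξ := by
        rw [abs_le]
        constructor <;> nlinarith
      rw [← h2b] at h1
      exact le_of_mul_le_mul_left h1 (by positivity)
  have key2 : ∀ t : ℝ, (b * t + a) ^ 2 ≤ D ↔ lo ≤ t ∧ t ≤ hi := by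
    intro t
    have habs : (b * t + a) ^ 2 ≤ D ↔ |b * t + a| ≤ s := by
      rw [← hs2]
      constructor
      · intro h
        nlinarith [abs_nonneg (b * t + a), sq_abs (b * t + a)]
      · intro h
        nlinarith [sq_abs (b * t + a), abs_nonneg (b * t + a)]
    rw [habs, abs_le]
    have e1 : -a / b * b = -a := div_mul_cancel₀ _ hb
    rcases hb.lt_or_gt with hbneg | hbpos
    · have e2 : s / |b| * b = -s := by
        rw [abs_of_neg hbneg, div_neg, neg_mul, div_mul_cancel₀ _ hb]
      have hlo' : lo * b = s - a := by rw [hlodef, sub_mul, e1, e2]; ring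
      have hhi' : hi * b = -s - a := by rw [hhidef, add_mul, e1, e2]; ring
      constructor
      · rintro ⟨h1, h2⟩
        constructor
        · rw [← mul_le_mul_right_of_neg hbneg, hlo']; linarith
        · rw [← mul_le_mul_right_of_neg hbneg, hhi']; linarith
      · rintro ⟨h1, h2⟩
        rw [← mul_le_mul_right_of_neg hbneg, hlo'] at h1
        rw [← mul_le_mul_right_of_neg hbneg, hhi'] at h2
        constructor <;> linarith
    · have e2 : s / |b| * b = s := by
        rw [abs_of_pos hbpos, div_mul_cancel₀ _ hb]
      have hlo' : lo * b = -s - a := by rw [hlodef, sub_mul, e1, e2]; ring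
      have hhi' : hi * b = s - a := by rw [hhidef, add_mul, e1, e2]; ring
      constructor
      · rintro ⟨h1, h2⟩
        constructor
        · rw [← mul_le_mul_iff_left₀ hbpos, hlo']; linarith
        · rw [← mul_le_mul_iff_left₀ hbpos, hhi']; linarith
      · rintro ⟨h1, h2⟩
        rw [← mul_le_mul_iff_left₀ hbpos, hlo'] at h1
        rw [← mul_le_mul_iff_left₀ hbpos, hhi'] at h2
        constructor <;> linarith
  have hSIcc : S = Set.Icc lo hi := by
    rw [hS]
    ext t
    simp only [Set.mem_setOf_eq, Set.mem_Icc]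
    rw [key t, key2 t]
  have hInf : sInf S = lo := by rw [hSIcc]; exact csInf_Icc hlohi.le
  have hSup : sSup S = hi := by rw [hSIcc]; exact csSup_Icc hlohi.le
  refine ⟨⟨lo, by rw [hSIcc]; exact Set.left_mem_Icc.2 hlohi.le⟩,
    by rw [hSIcc]; exact bddBelow_Icc, by rw [hSIcc]; exact bddAbove_Icc,
    by rw [hInf, hSup, hSIcc], ?_⟩
  have hT : |t₂| = 2 * |a| / |b| := by
    rw [ht₂, abs_div, abs_mul]; norm_num
  have harg : 1 + 4 * ξ / (|t₂| * |a|) = D / a ^ 2 := by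
    rw [hT, hDdef]
    have h2 : 2 * |a| / |b| * |a| = 2 * a ^ 2 / |b| := by
      rw [div_mul_eq_mul_div, mul_assoc, abs_mul_abs_self]; ring_nf
    rw [h2]
    field_simp
    ring
  have hroot : Real.sqrt (D / a ^ 2) = s / |a| := by
    rw [Real.sqrt_div hD.le, Real.sqrt_sq_eq_abs]
  have hdiff : hi - lo = 2 * (s / |b|) := by rw [hhidef, hlodef]; ring
  rw [hInf, hSup, harg, hroot, hT, hdiff]
  field_simp
end

section
/- Coherence interval lower bound, split case (abstract form of Theorem 1, second case): let a, b, ξ ∈ ℝ with a ≠ 0, b ≠ 0, ξ > 0, and suppose a² > 2·|b|·ξ. Then there exist real numbers s ≤ 0 and r ≥ 0 with r − s ≥ 2ξ/|a| such that |a·t + (b/2)·t²| ≤ ξ for every t ∈ Set.Icc s r; in other words, the connected component containing 0 of the set {t : |a·t + (b/2)·t²| ≤ ξ} has length at least 2ξ/|a|. -/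
lemma coherence_aux (a b ξ : ℝ) (ha : 0 < a) (hb : 0 < b) (hξ : 0 < ξ)
    (hcase : 2 * b * ξ < a ^ 2) :
    ∃ s r : ℝ, s ≤ 0 ∧ 0 ≤ r ∧ 2 * ξ / a ≤ r - s ∧
      ∀ t ∈ Set.Icc s r, |a * t + (b / 2) * t ^ 2| ≤ ξ := by
  set D₁ := Real.sqrt (a ^ 2 + 2 * b * ξ) with hD₁def
  set D₂ := Real.sqrt (a ^ 2 - 2 * b * ξ) with hD₂def
  have h1 : D₁ ^ 2 = a ^ 2 + 2 * b * ξ := Real.sq_sqrt (by nlinarith)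
  have h2 : D₂ ^ 2 = a ^ 2 - 2 * b * ξ := Real.sq_sqrt (by nlinarith)
  have hD₁ : 0 ≤ D₁ := Real.sqrt_nonneg _
  have hD₂ : 0 ≤ D₂ := Real.sqrt_nonneg _
  clear_value D₁ D₂
  clear hD₁def hD₂def
  have hD₁a : a ≤ D₁ := by nlinarith
  have hD₂a : D₂ ≤ a := by nlinarith
  have hbne : b ≠ 0 := hb.ne'
  set s := (D₂ - a) / b with hsdef
  set r := (D₁ - a) / b with hrdef
  have hbs : b * s = D₂ - a := by rw [hsdef]; field_simp
  have hbr : b * r = D₁ - a := by rw [hrdef]; field_simp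
  have hs0 : s ≤ 0 := by
    rw [hsdef, div_nonpos_iff]; right; exact ⟨by linarith, hb.le⟩
  have hr0 : 0 ≤ r := by
    rw [hrdef]; apply div_nonneg (by linarith) hb.le
  have hrs : r - s = (D₁ - D₂) / b := by rw [hrdef, hsdef]; ring
  clear_value s r
  clear hsdef hrdef
  have h2b : (2 * b : ℝ) ≠ 0 := by positivity
  have hqr : a * r + b / 2 * r ^ 2 = ξ := by
    have key : (2 * b) * (a * r + b / 2 * r ^ 2) = (2 * b) * ξ := by
      linear_combination (b * r + a + D₁) * hbr + h1
    exact mul_left_cancel₀ h2b key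
  have hqs : a * s + b / 2 * s ^ 2 = -ξ := by
    have key : (2 * b) * (a * s + b / 2 * s ^ 2) = (2 * b) * (-ξ) := by
      linear_combination (b * s + a + D₂) * hbs + h2
    exact mul_left_cancel₀ h2b key
  refine ⟨s, r, hs0, hr0, ?_, ?_⟩
  · -- length bound
    have hDD : D₂ ≤ D₁ := by nlinarith
    have hprod : D₁ * D₂ ≤ a ^ 2 := by
      nlinarith [sq_nonneg (D₁ * D₂ - a ^ 2), mul_nonneg hD₁ hD₂]
    have hsum : D₁ + D₂ ≤ 2 * a := by
      nlinarith [sq_nonneg (D₁ + D₂ - 2 * a)]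
    rw [div_le_iff₀ ha]
    have key : 2 * b * ξ * 2 ≤ (D₁ - D₂) * (2 * a) := by
      nlinarith [mul_le_mul_of_nonneg_left hsum (sub_nonneg.2 hDD)]
    rw [hrs, div_mul_eq_mul_div, le_div_iff₀ hb]
    nlinarith
  · intro t ht
    obtain ⟨hts, htr⟩ := ht
    rw [abs_le]
    constructor
    · -- lower: q(t) ≥ q(s) = -ξ
      have hnn : 0 ≤ a + b / 2 * (t + s) := by
        have hmul : 0 ≤ b * (t - s) := mul_nonneg hb.le (by linarith)
        linarith [hbs, hD₂, hmul]
      nlinarith [mul_nonneg (sub_nonneg.2 hts) hnn]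
    · -- upper: q(t) ≤ q(r) = ξ
      have hnn : 0 ≤ a + b / 2 * (r + t) := by
        have hmul : 0 ≤ b * (r + t - 2 * s) := mul_nonneg hb.le (by linarith)
        linarith [hbs, hD₂, hmul]
      nlinarith [mul_nonneg (sub_nonneg.2 htr) hnn]

/-- Coherence interval lower bound, split case (abstract Theorem 1, second case):
if `a² > 2|b|ξ`, the connected component of `{t : |a·t + (b/2)·t²| ≤ ξ}` containing `0`
has length at least `2ξ/|a|`. -/
theorem coherence_interval_length_split
    (a b ξ : ℝ) (ha : a ≠ 0) (hb : b ≠ 0) (hξ : 0 < ξ)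
    (hcase : 2 * |b| * ξ < a ^ 2) :
    ∃ s r : ℝ, s ≤ 0 ∧ 0 ≤ r ∧ 2 * ξ / |a| ≤ r - s ∧
      ∀ t ∈ Set.Icc s r, |a * t + (b / 2) * t ^ 2| ≤ ξ := by
  have hA : 0 < |a| := abs_pos.2 ha
  have hB : 0 < |b| := abs_pos.2 hb
  have hcase' : 2 * |b| * ξ < |a| ^ 2 := by rwa [sq_abs]
  obtain ⟨s, r, hs0, hr0, hlen, hmem⟩ := coherence_aux |a| |b| ξ hA hB hξ hcase'
  rcases lt_or_gt_of_ne (mul_ne_zero ha hb) with hab | hab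
  · -- opposite signs: use the reflected interval [-r, -s]
    refine ⟨-r, -s, neg_nonpos.2 hr0, neg_nonneg.2 hs0, by linarith, ?_⟩
    intro t ht
    obtain ⟨h1, h2⟩ := ht
    have hmt := hmem (-t) ⟨by linarith, by linarith⟩
    have heq : |a * t + b / 2 * t ^ 2| = abs (|a| * -t + |b| / 2 * (-t) ^ 2) := by
      rcases lt_or_gt_of_ne ha with h | h
      · have hb' : 0 < b := by nlinarith
        rw [abs_of_neg h, abs_of_pos hb']
        congr 1; ring
      · have hb' : b < 0 := by nlinarith
        rw [abs_of_pos h, abs_of_neg hb', ← abs_neg (a * t + b / 2 * t ^ 2)]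
        congr 1; ring
    rw [heq]
    exact hmt
  · -- same signs: use [s, r] directly
    refine ⟨s, r, hs0, hr0, hlen, ?_⟩
    intro t ht
    have hmt := hmem t ht
    have heq : |a * t + b / 2 * t ^ 2| = abs (|a| * t + |b| / 2 * t ^ 2) := by
      rcases lt_or_gt_of_ne ha with h | h
      · have hb' : b < 0 := by nlinarith
        rw [abs_of_neg h, abs_of_neg hb', ← abs_neg (a * t + b / 2 * t ^ 2)]
        congr 1; ring
      · have hb' : 0 < b := by nlinarith
        rw [abs_of_pos h, abs_of_pos hb']
    rw [heq]
    exact hmt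
end
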